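/- arXiv:2102.12161 — 4 statements merged into one kernel-verified Lean document; each statement's English description precedes it below -/
import Mathlib

section
/- Let 1 → G → Ĝ → Q → 1 be a short exact sequence of groups (with q : Ĝ → Q the quotient map) which virtually splits: there exist a finite-index subgroup Q₀ ≤ Q and a homomorphism s₀ : Q₀ → Ĝ with q ∘ s₀ = id on Q₀. Then every Ĝ-invariant homogeneous quasimorphism φ on G extends to a homogeneous quasimorphism φ̂ on Ĝ with φ̂|_G = φ and D(φ̂) ≤ 2·D(φ). -/
open Filter Topology

private lemma qseq_exists (D : ℝ) (a : ℕ → ℝ)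
    (ha : ∀ m n : ℕ, |a (m + n) - a m - a n| ≤ D) :
    ∃ L : ℝ, Tendsto (fun n : ℕ => a n / n) atTop (𝓝 L) ∧
      ∀ n : ℕ, 0 < n → |a n - n * L| ≤ D := by
  have hD : 0 ≤ D := le_trans (abs_nonneg _) (ha 0 0)
  set s : ℕ → ℝ := fun n => a n / n with hs
  have step1 : ∀ n k : ℕ, |a (k * n) - k * a n| ≤ k * D + D := by
    intro n k
    induction k with
    | zero =>
      have h0 := ha 0 0
      have e : a (0 + 0) - a 0 - a 0 = -(a 0) := by simp
      rw [e, abs_neg] at h0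
      simpa using h0
    | succ k ih =>
      have h1 := ha (k * n) n
      have e : a ((k + 1) * n) - ((k : ℝ) + 1) * a n
          = (a (k * n + n) - a (k * n) - a n) + (a (k * n) - (k : ℝ) * a n) := by
        rw [Nat.succ_mul]; ring
      calc |a ((k + 1) * n) - ((k + 1 : ℕ) : ℝ) * a n|
          = |(a (k * n + n) - a (k * n) - a n) + (a (k * n) - (k : ℝ) * a n)| := by
            push_cast; rw [e]
        _ ≤ |a (k * n + n) - a (k * n) - a n| + |a (k * n) - (k : ℝ) * a n| := abs_add_le _ _
        _ ≤ D + ((k : ℝ) * D + D) := add_le_add h1 ih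
        _ ≤ ((k + 1 : ℕ) : ℝ) * D + D := by push_cast; linarith
  have stepA : ∀ n m : ℕ, 0 < n → 0 < m → |s (m * n) - s n| ≤ D / n + D / m := by
    intro n m hn hm
    have hN : (0 : ℝ) < n := by exact_mod_cast hn
    have hM : (0 : ℝ) < m := by exact_mod_cast hm
    have hMN : (0 : ℝ) < (m : ℝ) * n := by positivity
    have e1 : s (m * n) - s n = (a (m * n) - m * a n) / ((m : ℝ) * n) := by
      have hc : ((m * n : ℕ) : ℝ) = (m : ℝ) * n := by push_cast; ring
      rw [hs]
      simp only []
      rw [hc]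
      field_simp
    rw [e1, abs_div, abs_of_pos hMN]
    calc |a (m * n) - m * a n| / ((m : ℝ) * n) ≤ ((m : ℝ) * D + D) / ((m : ℝ) * n) := by
          gcongr
          exact step1 n m
      _ = D / n + D / ((m : ℝ) * n) := by field_simp
      _ ≤ D / n + D / m := by
          have hN1 : (1 : ℝ) ≤ n := by exact_mod_cast hn
          gcongr
          nlinarith
  have step2 : ∀ n m : ℕ, 0 < n → 0 < m → |s n - s m| ≤ 2 * D / n + 2 * D / m := by
    intro n m hn hm
    have h1 := stepA n m hn hm
    have h2 := stepA m n hm hn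
    rw [Nat.mul_comm] at h2
    calc |s n - s m| = |(s n - s (m * n)) + (s (m * n) - s m)| := by ring_nf
      _ ≤ |s n - s (m * n)| + |s (m * n) - s m| := abs_add_le _ _
      _ ≤ (D / n + D / m) + (D / m + D / n) := add_le_add (by rw [abs_sub_comm]; exact h1) h2
      _ = 2 * D / n + 2 * D / m := by ring
  -- Cauchy sequence for the shifted sequence
  have hcauchy : CauchySeq (fun n : ℕ => s (n + 1)) := by
    apply cauchySeq_of_le_tendsto_0 (b := fun N : ℕ => 4 * D / (N + 1))
    · intro n m N hn hm
      have h1 := step2 (n + 1) (m + 1) (Nat.succ_pos n) (Nat.succ_pos m)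
      rw [Real.dist_eq]
      have hNn : ((N : ℝ) + 1) ≤ (n : ℝ) + 1 := by exact_mod_cast Nat.succ_le_succ hn
      have hNm : ((N : ℝ) + 1) ≤ (m : ℝ) + 1 := by exact_mod_cast Nat.succ_le_succ hm
      have hN0 : (0 : ℝ) < (N : ℝ) + 1 := by positivity
      calc |s (n + 1) - s (m + 1)| ≤ 2 * D / ((n : ℕ) + 1 : ℕ) + 2 * D / ((m : ℕ) + 1 : ℕ) := h1
        _ = 2 * D / ((n : ℝ) + 1) + 2 * D / ((m : ℝ) + 1) := by push_cast; ring
        _ ≤ 2 * D / ((N : ℝ) + 1) + 2 * D / ((N : ℝ) + 1) := by gcongr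
        _ = 4 * D / ((N : ℝ) + 1) := by ring
    · have h := (tendsto_const_div_atTop_nhds_zero_nat (4 * D)).comp (tendsto_add_atTop_nat 1)
      refine h.congr ?_
      intro n; simp only [Function.comp_apply]; push_cast; ring
  obtain ⟨L, hL⟩ := cauchySeq_tendsto_of_complete hcauchy
  have hsL : Tendsto s atTop (𝓝 L) := (tendsto_add_atTop_iff_nat 1).mp hL
  refine ⟨L, hsL, ?_⟩
  intro n hn
  have hN : (0 : ℝ) < n := by exact_mod_cast hn
  -- |s n - L| ≤ D / n
  have hcomp : Tendsto (fun m : ℕ => s ((m + 1) * n)) atTop (𝓝 L) := by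
    apply hsL.comp
    apply tendsto_atTop_mono (fun m => ?_) tendsto_id
    calc m ≤ m + 1 := Nat.le_succ m
      _ ≤ (m + 1) * n := Nat.le_mul_of_pos_right _ hn
  have habs : Tendsto (fun m : ℕ => |s n - s ((m + 1) * n)| - D / ((m : ℝ) + 1)) atTop
      (𝓝 (|s n - L| - 0)) := by
    apply Tendsto.sub
    · exact ((tendsto_const_nhds.sub hcomp).abs)
    · have h := (tendsto_const_div_atTop_nhds_zero_nat D).comp (tendsto_add_atTop_nat 1)
      refine h.congr ?_
      intro m; simp only [Function.comp_apply]; push_cast; ring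
  have hle : ∀ m : ℕ, |s n - s ((m + 1) * n)| - D / ((m : ℝ) + 1) ≤ D / n := by
    intro m
    have h := stepA n (m + 1) hn (Nat.succ_pos m)
    rw [abs_sub_comm] at h
    have e : (((m + 1 : ℕ)) : ℝ) = (m : ℝ) + 1 := by push_cast; ring
    rw [e] at h
    linarith
  have hfin : |s n - L| - 0 ≤ D / n := le_of_tendsto habs (Eventually.of_forall hle)
  have hfin' : |s n - L| ≤ D / n := by linarith
  have e2 : a n - n * L = (n : ℝ) * (s n - L) := by
    rw [hs]; field_simp
  rw [e2, abs_mul, abs_of_pos hN]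
  calc (n : ℝ) * |s n - L| ≤ (n : ℝ) * (D / n) := by
        exact mul_le_mul_of_nonneg_left hfin' (le_of_lt hN)
    _ = D := by field_simp

private lemma homog_exists {H : Type*} [Group H] (D : ℝ) (f : H → ℝ)
    (hf : ∀ a b : H, |f (a * b) - f a - f b| ≤ D) :
    ∃ F : H → ℝ,
      (∀ (g : H) (m : ℤ), F (g ^ m) = m * F g) ∧
      (∀ g : H, (∀ n : ℕ, 0 < n → f (g ^ n) = n * f g) → F g = f g) ∧
      (∀ a b : H, |F (a * b) - F a - F b| ≤ 2 * D) := by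
  have hD : 0 ≤ D := le_trans (abs_nonneg _) (hf 1 1)
  have key : ∀ g : H, ∃ L, Tendsto (fun n : ℕ => f (g ^ n) / n) atTop (𝓝 L) ∧
      ∀ n : ℕ, 0 < n → |f (g ^ n) - n * L| ≤ D := by
    intro g
    refine qseq_exists D (fun n => f (g ^ n)) (fun m n => ?_)
    show |f (g ^ (m + n)) - f (g ^ m) - f (g ^ n)| ≤ D
    rw [pow_add]; exact hf _ _
  choose F hFt hFb using key
  have hF1 : ∀ g : H, |f g - F g| ≤ D := by
    intro g
    have := hFb g 1 one_pos
    simpa using this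
  have hFone : F 1 = 0 := by
    refine tendsto_nhds_unique (hFt 1) ?_
    have := tendsto_const_div_atTop_nhds_zero_nat (f 1)
    refine this.congr ?_
    intro n; simp [one_pow]
  have hFnat : ∀ (g : H) (k : ℕ), F (g ^ k) = k * F g := by
    intro g k
    rcases Nat.eq_zero_or_pos k with hk | hk
    · subst hk; simp [hFone]
    · have hmono : Tendsto (fun n : ℕ => k * n) atTop atTop := by
        apply tendsto_atTop_mono (fun n => ?_) tendsto_id
        calc (id n : ℕ) = n := rfl
          _ ≤ k * n := Nat.le_mul_of_pos_left _ hk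
      have t1 : Tendsto (fun n : ℕ => f (g ^ (k * n)) / ((k * n : ℕ) : ℝ)) atTop (𝓝 (F g)) :=
        (hFt g).comp hmono
      have t2 : Tendsto (fun n : ℕ => f ((g ^ k) ^ n) / n) atTop (𝓝 ((k : ℝ) * F g)) := by
        have := t1.const_mul (k : ℝ)
        refine this.congr ?_
        intro n
        rw [← pow_mul]
        rcases Nat.eq_zero_or_pos n with hn | hn
        · subst hn; simp
        · have hkR : ((k : ℝ)) ≠ 0 := by positivity
          have hnR : ((n : ℝ)) ≠ 0 := by positivity
          push_cast
          field_simp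
      exact tendsto_nhds_unique (hFt (g ^ k)) t2
  have hFinv : ∀ g : H, F g⁻¹ = - F g := by
    intro g
    refine tendsto_nhds_unique (hFt g⁻¹) ?_
    have hr : Tendsto (fun n : ℕ => f (g⁻¹ ^ n) / n - (f 1 / n - f (g ^ n) / n)) atTop (𝓝 0) := by
      apply squeeze_zero_norm (a := fun n : ℕ => D / n) _ (tendsto_const_div_atTop_nhds_zero_nat D)
      intro n
      rcases Nat.eq_zero_or_pos n with hn | hn
      · subst hn; simp
      · have hnR : (0 : ℝ) < n := by exact_mod_cast hn
        have h1 := hf (g ^ n) (g⁻¹ ^ n)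
        have e1 : g ^ n * g⁻¹ ^ n = 1 := by
          rw [inv_pow, mul_inv_cancel]
        rw [e1] at h1
        have e2 : f (g⁻¹ ^ n) / n - (f 1 / n - f (g ^ n) / n)
            = -((f 1 - f (g ^ n) - f (g⁻¹ ^ n)) / n) := by field_simp; ring
        rw [Real.norm_eq_abs, e2, abs_neg, abs_div, abs_of_pos hnR]
        exact div_le_div_of_nonneg_right h1 hnR.le |>.trans le_rfl
    have hmain : Tendsto (fun n : ℕ => f 1 / n - f (g ^ n) / n) atTop (𝓝 (0 - F g)) :=
      (tendsto_const_div_atTop_nhds_zero_nat (f 1)).sub (hFt g)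
    have := hmain.add hr
    simp only [add_zero] at this
    have e3 : (fun n : ℕ => (f 1 / n - f (g ^ n) / n) + (f (g⁻¹ ^ n) / n - (f 1 / n - f (g ^ n) / n)))
        = fun n : ℕ => f (g⁻¹ ^ n) / n := by funext n; ring
    rw [e3] at this
    simpa using this
  have hFz : ∀ (g : H) (m : ℤ), F (g ^ m) = m * F g := by
    intro g m
    cases m with
    | ofNat n =>
      have : (Int.ofNat n : ℤ) = (n : ℤ) := rfl
      rw [this, zpow_natCast, hFnat]
      push_cast; ring
    | negSucc n =>
      rw [zpow_negSucc, hFinv, hFnat]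
      rw [Int.cast_negSucc]
      push_cast; ring
  have hconj : ∀ a b : H, F (a * b * a⁻¹) = F b := by
    intro a b
    refine tendsto_nhds_unique (hFt (a * b * a⁻¹)) ?_
    set C : ℝ := 2 * D + |f a| + |f a⁻¹| with hC
    have hr : Tendsto (fun n : ℕ => f (a * b ^ n * a⁻¹) / n - f (b ^ n) / n) atTop (𝓝 0) := by
      apply squeeze_zero_norm (a := fun n : ℕ => C / n) _ (tendsto_const_div_atTop_nhds_zero_nat C)
      intro n
      rcases Nat.eq_zero_or_pos n with hn | hn
      · subst hn; simp
      · have hnR : (0 : ℝ) < n := by exact_mod_cast hn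
        have h1 := hf a (b ^ n * a⁻¹)
        have h2 := hf (b ^ n) a⁻¹
        rw [← mul_assoc] at h1
        have e2 : f (a * b ^ n * a⁻¹) / n - f (b ^ n) / n = (f (a * b ^ n * a⁻¹) - f (b ^ n)) / n := by
          ring
        rw [Real.norm_eq_abs, e2, abs_div, abs_of_pos hnR]
        apply div_le_div_of_nonneg_right _ hnR.le
        have hb1 := abs_le.mp h1
        have hb2 := abs_le.mp h2
        have ha1 := abs_le.mp (le_refl |f a|)
        rw [abs_le]
        constructor
        · have := neg_abs_le (f a); have := neg_abs_le (f a⁻¹); rw [hC]; nlinarith [neg_abs_le (f a), neg_abs_le (f a⁻¹), le_abs_self (f a), le_abs_self (f a⁻¹)]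
        · rw [hC]; nlinarith [neg_abs_le (f a), neg_abs_le (f a⁻¹), le_abs_self (f a), le_abs_self (f a⁻¹)]
    have hmain : Tendsto (fun n : ℕ => f (b ^ n) / n) atTop (𝓝 (F b)) := hFt b
    have := hmain.add hr
    simp only [add_zero] at this
    have e3 : (fun n : ℕ => f (b ^ n) / n + (f (a * b ^ n * a⁻¹) / n - f (b ^ n) / n))
        = fun n : ℕ => f ((a * b * a⁻¹) ^ n) / n := by
      funext n; rw [conj_pow]; ring
    rw [e3] at this
    simpa using this
  refine ⟨F, hFz, ?_, ?_⟩
  · intro g hg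
    refine tendsto_nhds_unique (hFt g) ?_
    have : Tendsto (fun _ : ℕ => f g) atTop (𝓝 (f g)) := tendsto_const_nhds
    refine this.congr' ?_
    filter_upwards [eventually_ge_atTop 1] with n hn
    have hnR : ((n : ℝ)) ≠ 0 := by positivity
    rw [hg n hn, mul_comm, mul_div_assoc, div_self hnR, mul_one]
  · -- defect bound
    have up : ∀ u v : H, F (u * v) ≤ F u + F v + 2 * D := by
      intro u v
      set c : ℕ → H := fun n => (u * v) ^ n * (v ^ n)⁻¹ with hc
      have hcs : ∀ n : ℕ, c (n + 1) = c n * (v ^ n * u * (v ^ n)⁻¹) := by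
        intro n
        simp only [hc]
        rw [pow_succ (u * v), pow_succ v]
        group
      have hcb : ∀ n : ℕ, f (c n) ≤ f 1 + n * (F u + 2 * D) := by
        intro n
        induction n with
        | zero => simp [hc]
        | succ n ih =>
          have h1 : f (c (n + 1)) ≤ f (c n) + f (v ^ n * u * (v ^ n)⁻¹) + D := by
            rw [hcs n]
            have := abs_le.mp (hf (c n) (v ^ n * u * (v ^ n)⁻¹))
            linarith [this.2]
          have h2 : f (v ^ n * u * (v ^ n)⁻¹) ≤ F u + D := by
            have := abs_le.mp (hF1 (v ^ n * u * (v ^ n)⁻¹))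
            have hcj := hconj (v ^ n) u
            linarith [this.2]
          push_cast
          push_cast at ih
          linarith
      have main : ∀ n : ℕ, 0 < n →
          F (u * v) - F u - F v - 2 * D ≤ (f 1 + 3 * D) / n := by
        intro n hn
        have hnR : (0 : ℝ) < n := by exact_mod_cast hn
        have h1 : (n : ℝ) * F (u * v) ≤ f ((u * v) ^ n) + D := by
          have := abs_le.mp (hFb (u * v) n hn)
          linarith [this.1]
        have h2 : (u * v) ^ n = c n * v ^ n := by
          simp only [hc]; group
        have h3 : f (c n * v ^ n) ≤ f (c n) + f (v ^ n) + D := by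
          have := abs_le.mp (hf (c n) (v ^ n))
          linarith [this.2]
        have h4 : f (v ^ n) ≤ (n : ℝ) * F v + D := by
          have := abs_le.mp (hFb v n hn)
          linarith [this.2]
        have h5 := hcb n
        rw [h2] at h1
        rw [le_div_iff₀ hnR]
        nlinarith
      have hlim : Tendsto (fun n : ℕ => (f 1 + 3 * D) / n) atTop (𝓝 0) :=
        tendsto_const_div_atTop_nhds_zero_nat _
      have : F (u * v) - F u - F v - 2 * D ≤ 0 := by
        apply ge_of_tendsto hlim
        filter_upwards [eventually_ge_atTop 1] with n hn
        exact main n hn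
      linarith
    intro x y
    have h1 := up x y
    have h2 := up y⁻¹ x⁻¹
    have e1 : F (y⁻¹ * x⁻¹) = - F (x * y) := by
      rw [← mul_inv_rev, hFinv]
    rw [e1, hFinv, hFinv] at h2
    rw [abs_le]
    constructor <;> linarith

private lemma induced_exists {H : Type*} [Group H] (K : Subgroup H) [Finite (H ⧸ K)]
    (D : ℝ) (ψ : K → ℝ) (hψ : ∀ a b : K, |ψ (a * b) - ψ a - ψ b| ≤ D) :
    ∃ f : H → ℝ,
      (∀ a b : H, |f (a * b) - f a - f b| ≤ D) ∧
      (∀ (g : H) (r : ℝ),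
        (∀ t : H, ∃ h : t⁻¹ * g * t ∈ K, ψ ⟨t⁻¹ * g * t, h⟩ = r) → f g = r) := by
  classical
  have hD : 0 ≤ D := le_trans (abs_nonneg _) (hψ 1 1)
  letI : Fintype (H ⧸ K) := Fintype.ofFinite _
  have hmem : ∀ (g : H) (c : H ⧸ K), ((g • c).out)⁻¹ * (g * c.out) ∈ K := by
    intro g c
    apply QuotientGroup.eq.mp
    rw [QuotientGroup.out_eq']
    conv_lhs => rw [← QuotientGroup.out_eq' c]
    rfl
  set h : H → (H ⧸ K) → K := fun g c => ⟨((g • c).out)⁻¹ * (g * c.out), hmem g c⟩ with hh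
  have hcoc : ∀ (g g' : H) (c : H ⧸ K), h (g * g') c = h g (g' • c) * h g' c := by
    intro g g' c
    apply Subtype.ext
    show ((g * g') • c).out⁻¹ * (g * g' * c.out)
        = (((g • (g' • c)).out⁻¹ * (g * (g' • c).out)) * ((g' • c).out⁻¹ * (g' * c.out)) : H)
    rw [mul_smul]
    group
  set k : ℕ := Fintype.card (H ⧸ K) with hk
  have hk0 : 0 < k := Fintype.card_pos
  have hkR : (0 : ℝ) < k := by exact_mod_cast hk0
  refine ⟨fun g => (∑ c : H ⧸ K, ψ (h g c)) / k, ?_, ?_⟩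
  · intro g g'
    have hre : ∑ c : H ⧸ K, ψ (h g (g' • c)) = ∑ c : H ⧸ K, ψ (h g c) :=
      Fintype.sum_equiv (MulAction.toPerm g') _ _ (fun c => rfl)
    have e1 : ∑ c : H ⧸ K, ψ (h (g * g') c)
        = ∑ c : H ⧸ K, ψ (h g (g' • c) * h g' c) :=
      Finset.sum_congr rfl (fun c _ => by rw [hcoc])
    have e2 : (∑ c : H ⧸ K, (ψ (h g (g' • c) * h g' c) - ψ (h g (g' • c)) - ψ (h g' c)))
        = ∑ c : H ⧸ K, ψ (h (g * g') c) - ∑ c : H ⧸ K, ψ (h g c) - ∑ c : H ⧸ K, ψ (h g' c) := by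
      rw [Finset.sum_sub_distrib, Finset.sum_sub_distrib, e1, hre]
    have e3 : (∑ c : H ⧸ K, ψ (h (g * g') c)) / k - (∑ c : H ⧸ K, ψ (h g c)) / k
        - (∑ c : H ⧸ K, ψ (h g' c)) / k
        = (∑ c : H ⧸ K, (ψ (h g (g' • c) * h g' c) - ψ (h g (g' • c)) - ψ (h g' c))) / k := by
      rw [e2]; ring
    rw [e3, abs_div, abs_of_pos hkR]
    rw [div_le_iff₀ hkR]
    calc |∑ c : H ⧸ K, (ψ (h g (g' • c) * h g' c) - ψ (h g (g' • c)) - ψ (h g' c))|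
        ≤ ∑ c : H ⧸ K, |ψ (h g (g' • c) * h g' c) - ψ (h g (g' • c)) - ψ (h g' c)| :=
          Finset.abs_sum_le_sum_abs _ _
      _ ≤ ∑ _c : H ⧸ K, D := Finset.sum_le_sum (fun c _ => hψ _ _)
      _ = k * D := by rw [Finset.sum_const, Finset.card_univ, nsmul_eq_mul]
      _ = D * k := by ring
  · intro g r hg
    have hfix : ∀ c : H ⧸ K, g • c = c := by
      intro c
      conv_lhs => rw [← QuotientGroup.out_eq' c]
      conv_rhs => rw [← QuotientGroup.out_eq' c]
      show QuotientGroup.mk (g * c.out) = QuotientGroup.mk c.out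
      apply QuotientGroup.eq.mpr
      obtain ⟨hK, -⟩ := hg c.out
      have := K.inv_mem hK
      have e : (c.out⁻¹ * g * c.out)⁻¹ = (g * c.out)⁻¹ * c.out := by group
      rwa [e] at this
    have hval : ∀ c : H ⧸ K, ψ (h g c) = r := by
      intro c
      obtain ⟨hK, hr⟩ := hg c.out
      have e : h g c = ⟨c.out⁻¹ * g * c.out, hK⟩ := by
        apply Subtype.ext
        show ((g • c).out)⁻¹ * (g * c.out) = c.out⁻¹ * g * c.out
        rw [hfix c]
        group
      rw [e, hr]
    have : ∑ c : H ⧸ K, ψ (h g c) = k * r := by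
      rw [Finset.sum_congr rfl (fun c _ => hval c), Finset.sum_const, Finset.card_univ,
        nsmul_eq_mul]
    show (∑ c : H ⧸ K, ψ (h g c)) / k = r
    rw [this, mul_comm, mul_div_assoc, div_self (ne_of_gt hkR), mul_one]



/-- Extension theorem for discrete groups: if the short exact sequence
`1 → G → Ghat → Q → 1` virtually splits, then every `Ghat`-invariant homogeneous
quasimorphism on `G` extends to a homogeneous quasimorphism on `Ghat` with defect
at most twice the original defect bound. -/
theorem extension_of_invariant_quasimorphism_virtual_split
    {Ghat Q : Type*} [Group Ghat] [Group Q]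
    (q : Ghat →* Q) (hq : Function.Surjective q)
    (G : Subgroup Ghat) (hker : q.ker = G)
    (Q₀ : Subgroup Q) (hfin : Q₀.FiniteIndex)
    (s₀ : Q₀ →* Ghat) (hs₀ : ∀ x : Q₀, q (s₀ x) = x)
    (φ : G → ℝ) (D : ℝ)
    (hD : ∀ x y : G, |φ (x * y) - φ x - φ y| ≤ D)
    (hhom : ∀ (x : G) (m : ℤ), φ (x ^ m) = m * φ x)
    (hinv : ∀ (g : Ghat) (x : G) (h : g * (x : Ghat) * g⁻¹ ∈ G), φ ⟨g * x * g⁻¹, h⟩ = φ x) :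
    ∃ φhat : Ghat → ℝ,
      (∀ (g : Ghat) (m : ℤ), φhat (g ^ m) = m * φhat g) ∧
      (∀ x : G, φhat x = φ x) ∧
      (∀ x y : Ghat, |φhat (x * y) - φhat x - φhat y| ≤ 2 * D) := by
  classical
  -- membership translations
  have memG : ∀ z : Ghat, q z = 1 → z ∈ G := by
    intro z hz
    rw [← hker]
    exact MonoidHom.mem_ker.mpr hz
  have qG : ∀ z : Ghat, z ∈ G → q z = 1 := by
    intro z hz
    have hz' : z ∈ q.ker := by rw [hker]; exact hz
    exact MonoidHom.mem_ker.mp hz'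
  set G₀ : Subgroup Ghat := Q₀.comap q with hG₀
  haveI hFI : G₀.FiniteIndex := by
    constructor
    rw [hG₀, Subgroup.index_comap_of_surjective _ hq]
    exact hfin.index_ne_zero
  haveI : Finite (Ghat ⧸ G₀) := Subgroup.finite_quotient_of_finiteIndex
  -- the quasimorphism ψ on G₀
  have hmemQ : ∀ g : G₀, q (g : Ghat) ∈ Q₀ := fun g => g.2
  have hmemG : ∀ g : G₀, (g : Ghat) * (s₀ ⟨q (g : Ghat), g.2⟩)⁻¹ ∈ G := by
    intro g
    apply memG
    rw [map_mul, map_inv, hs₀]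
    simp
  set ψ : G₀ → ℝ := fun g => φ ⟨(g : Ghat) * (s₀ ⟨q (g : Ghat), g.2⟩)⁻¹, hmemG g⟩ with hψdef
  have hψD : ∀ a b : G₀, |ψ (a * b) - ψ a - ψ b| ≤ D := by
    intro a b
    set sa : Ghat := s₀ ⟨q (a : Ghat), a.2⟩ with hsa
    set sb : Ghat := s₀ ⟨q (b : Ghat), b.2⟩ with hsb
    set sab : Ghat := s₀ ⟨q ((a * b : G₀) : Ghat), (a * b).2⟩ with hsab
    have hs : sab = sa * sb := by
      rw [hsa, hsb, hsab, ← map_mul]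
      congr 1
      apply Subtype.ext
      show q ((a * b : G₀) : Ghat) = q (a : Ghat) * q (b : Ghat)
      rw [Subgroup.coe_mul, map_mul]
    set xa : G := ⟨(a : Ghat) * sa⁻¹, hmemG a⟩ with hxa
    set xb : G := ⟨(b : Ghat) * sb⁻¹, hmemG b⟩ with hxb
    have hy' : sa * (xb : Ghat) * sa⁻¹ ∈ G := by
      apply memG
      rw [map_mul, map_mul, map_inv, qG _ xb.2]
      simp
    set y' : G := ⟨sa * (xb : Ghat) * sa⁻¹, hy'⟩ with hy'def
    have hkey : (⟨((a * b : G₀) : Ghat) * sab⁻¹, hmemG (a * b)⟩ : G) = xa * y' := by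
      apply Subtype.ext
      show ((a * b : G₀) : Ghat) * sab⁻¹ = ((a : Ghat) * sa⁻¹) * (sa * ((b : Ghat) * sb⁻¹) * sa⁻¹)
      rw [Subgroup.coe_mul, hs]
      group
    have hval : ψ (a * b) = φ (xa * y') := by
      rw [hψdef]
      simp only []
      rw [← hkey]
    have hinv' : φ y' = φ xb := hinv sa xb hy'
    have hψa : ψ a = φ xa := rfl
    have hψb : ψ b = φ xb := rfl
    rw [hval, hψa, hψb, ← hinv']
    exact hD xa y'
  obtain ⟨f, hfD, hfval⟩ := induced_exists G₀ D ψ hψD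
  -- f restricted to G equals φ
  have hfG : ∀ x : G, f (x : Ghat) = φ x := by
    intro x
    apply hfval (x : Ghat) (φ x)
    intro t
    have hq1 : q (t⁻¹ * (x : Ghat) * t) = 1 := by
      rw [map_mul, map_mul, map_inv, qG _ x.2]
      simp
    have hK : t⁻¹ * (x : Ghat) * t ∈ G₀ := by
      apply Subgroup.mem_comap.mpr
      rw [hq1]
      exact Q₀.one_mem
    refine ⟨hK, ?_⟩
    have hzG : t⁻¹ * (x : Ghat) * t ∈ G := memG _ hq1
    have hone : (⟨q ((⟨t⁻¹ * (x : Ghat) * t, hK⟩ : G₀) : Ghat), hK⟩ : Q₀) = 1 := by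
      apply Subtype.ext
      exact hq1
    have e1 : ψ ⟨t⁻¹ * (x : Ghat) * t, hK⟩ = φ ⟨t⁻¹ * (x : Ghat) * t, hzG⟩ := by
      rw [hψdef]
      simp only []
      congr 1
      apply Subtype.ext
      show (t⁻¹ * (x : Ghat) * t) * (s₀ ⟨q (t⁻¹ * (x : Ghat) * t), hK⟩)⁻¹
          = t⁻¹ * (x : Ghat) * t
      rw [show (⟨q (t⁻¹ * (x : Ghat) * t), hK⟩ : Q₀) = 1 from Subtype.ext hq1]
      rw [map_one, inv_one, mul_one]
    rw [e1]
    have h'' : t⁻¹ * (x : Ghat) * (t⁻¹)⁻¹ ∈ G := by rw [inv_inv]; exact hzG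
    have := hinv t⁻¹ x h''
    have e2 : (⟨t⁻¹ * (x : Ghat) * (t⁻¹)⁻¹, h''⟩ : G) = ⟨t⁻¹ * (x : Ghat) * t, hzG⟩ := by
      apply Subtype.ext
      show t⁻¹ * (x : Ghat) * (t⁻¹)⁻¹ = t⁻¹ * (x : Ghat) * t
      rw [inv_inv]
    rw [e2] at this
    exact this
  obtain ⟨F, hFhom, hFfix, hFD⟩ := homog_exists D f hfD
  refine ⟨F, hFhom, ?_, hFD⟩
  intro x
  have hpows : ∀ n : ℕ, 0 < n → f ((x : Ghat) ^ n) = n * f (x : Ghat) := by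
    intro n hn
    have h1 : ((x : Ghat)) ^ n = ((x ^ n : G) : Ghat) := by
      rw [SubgroupClass.coe_pow]
    rw [h1, hfG (x ^ n), hfG x]
    have h2 := hhom x (n : ℤ)
    rw [zpow_natCast] at h2
    rw [h2]
    push_cast
    ring
  rw [hFfix (x : Ghat) hpows, hfG x]
end

section
/- Let Ĝ be a group, f, g_α, g_β ∈ Ĝ with g_α·g_β ∈ H for a subgroup H containing f, and let φ : H → ℝ be a homogeneous quasimorphism on H with f ∈ H and g_α g_β ∈ H. Set γ = [f, g_α]·[f, g_β⁻¹]⁻¹. If [f,g_α], [f,g_β⁻¹] and γ all lie in H, then |φ(γ)| ≤ 3·D(φ). -/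
lemma qm_inv {G : Type*} [Group G] (φ : G → ℝ)
    (hhom : ∀ (x : G) (m : ℤ), φ (x ^ m) = m * φ x) (x : G) : φ x⁻¹ = -φ x := by
  have := hhom x (-1)
  simpa using this

lemma qm_conj {G : Type*} [Group G] (φ : G → ℝ) (D : ℝ)
    (hD : ∀ x y : G, |φ (x * y) - φ x - φ y| ≤ D)
    (hhom : ∀ (x : G) (m : ℤ), φ (x ^ m) = m * φ x)
    (g x : G) : φ (g * x * g⁻¹) = φ x := by
  have hDnn : (0:ℝ) ≤ D := (abs_nonneg _).trans (hD 1 1)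
  have step : ∀ y : G, |φ (g * y * g⁻¹) - φ y| ≤ 2 * D := by
    intro y
    have h1 := hD g (y * g⁻¹)
    have h2 := hD y g⁻¹
    rw [qm_inv φ hhom g] at h2
    rw [show g * (y * g⁻¹) = g * y * g⁻¹ by group] at h1
    have : φ (g * y * g⁻¹) - φ y =
        (φ (g * y * g⁻¹) - φ g - φ (y * g⁻¹)) + (φ (y * g⁻¹) - φ y - -φ g) := by
      ring
    calc |φ (g * y * g⁻¹) - φ y| = |(φ (g * y * g⁻¹) - φ g - φ (y * g⁻¹)) +
          (φ (y * g⁻¹) - φ y - -φ g)| := by rw [this]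
      _ ≤ |φ (g * y * g⁻¹) - φ g - φ (y * g⁻¹)| + |φ (y * g⁻¹) - φ y - -φ g| := abs_add_le _ _
      _ ≤ 2 * D := by linarith
  have key : ∀ n : ℕ, (n : ℝ) * |φ (g * x * g⁻¹) - φ x| ≤ 2 * D := by
    intro n
    have hpow : (g * x * g⁻¹) ^ n = g * x ^ n * g⁻¹ := by
      induction n with
      | zero => group
      | succ k ih => rw [pow_succ, ih, pow_succ]; group
    have h1 : φ ((g * x * g⁻¹) ^ n) = n * φ (g * x * g⁻¹) := by
      have := hhom (g * x * g⁻¹) (n : ℤ)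
      rwa [zpow_natCast, Int.cast_natCast] at this
    have h2 : φ (x ^ n) = n * φ x := by
      have := hhom x (n : ℤ)
      rwa [zpow_natCast, Int.cast_natCast] at this
    have h3 := step (x ^ n)
    rw [← hpow, h1, h2] at h3
    calc (n : ℝ) * |φ (g * x * g⁻¹) - φ x| = |(n:ℝ) * φ (g * x * g⁻¹) - n * φ x| := by
          rw [← mul_sub, abs_mul, abs_of_nonneg (by positivity : (0:ℝ) ≤ (n:ℝ))]
      _ ≤ 2 * D := h3
  by_contra h
  have hpos : 0 < |φ (g * x * g⁻¹) - φ x| := by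
    rcases lt_or_eq_of_le (abs_nonneg (φ (g * x * g⁻¹) - φ x)) with h' | h'
    · exact h'
    · exact absurd (by linarith [abs_eq_zero.mp h'.symm] : φ (g * x * g⁻¹) = φ x) h
  obtain ⟨n, hn⟩ := exists_nat_gt (2 * D / |φ (g * x * g⁻¹) - φ x|)
  have := key n
  rw [div_lt_iff₀ hpos] at hn
  linarith

/-- Estimate for the value of a homogeneous quasimorphism on
`γ = [f, g_α]·[f, g_β⁻¹]⁻¹` when `f` and `g_α g_β` lie in the subgroup `H`. -/
theorem quasimorphism_commutator_estimate
    {Ghat : Type*} [Group Ghat] (H : Subgroup Ghat)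
    (φ : H → ℝ) (D : ℝ)
    (hD : ∀ x y : H, |φ (x * y) - φ x - φ y| ≤ D)
    (hhom : ∀ (x : H) (m : ℤ), φ (x ^ m) = m * φ x)
    (f gα gβ : Ghat) (hf : f ∈ H) (hαβ : gα * gβ ∈ H)
    (h₁ : f * gα * f⁻¹ * gα⁻¹ ∈ H)
    (h₂ : f * gβ⁻¹ * f⁻¹ * gβ ∈ H)
    (hγ : (f * gα * f⁻¹ * gα⁻¹) * (f * gβ⁻¹ * f⁻¹ * gβ)⁻¹ ∈ H) :
    |φ ⟨(f * gα * f⁻¹ * gα⁻¹) * (f * gβ⁻¹ * f⁻¹ * gβ)⁻¹, hγ⟩| ≤ 3 * D := by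
  have hc : gα * f⁻¹ * gα⁻¹ ∈ H := by
    have := H.mul_mem (H.inv_mem hf) h₁
    rwa [show f⁻¹ * (f * gα * f⁻¹ * gα⁻¹) = gα * f⁻¹ * gα⁻¹ by group] at this
  have hd : gβ⁻¹ * f⁻¹ * gβ ∈ H := by
    have := H.mul_mem (H.inv_mem hf) h₂
    rwa [show f⁻¹ * (f * gβ⁻¹ * f⁻¹ * gβ) = gβ⁻¹ * f⁻¹ * gβ by group] at this
  set F : H := ⟨f, hf⟩
  set Gab : H := ⟨gα * gβ, hαβ⟩
  set a : H := ⟨f * gα * f⁻¹ * gα⁻¹, h₁⟩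
  set b : H := ⟨f * gβ⁻¹ * f⁻¹ * gβ, h₂⟩
  set c : H := ⟨gα * f⁻¹ * gα⁻¹, hc⟩
  set d : H := ⟨gβ⁻¹ * f⁻¹ * gβ, hd⟩
  have haeq : a = F * c := Subtype.ext (by show f * gα * f⁻¹ * gα⁻¹ = f * (gα * f⁻¹ * gα⁻¹); group)
  have hbeq : b = F * d := Subtype.ext (by show f * gβ⁻¹ * f⁻¹ * gβ = f * (gβ⁻¹ * f⁻¹ * gβ); group)
  have hconj : c = Gab * d * Gab⁻¹ := Subtype.ext (by
    show gα * f⁻¹ * gα⁻¹ = (gα * gβ) * (gβ⁻¹ * f⁻¹ * gβ) * (gα * gβ)⁻¹; group)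
  have hcd : φ c = φ d := by rw [hconj]; exact qm_conj φ D hD hhom Gab d
  have hγeq : (⟨(f * gα * f⁻¹ * gα⁻¹) * (f * gβ⁻¹ * f⁻¹ * gβ)⁻¹, hγ⟩ : H) = a * b⁻¹ :=
    Subtype.ext rfl
  have h3 := hD a b⁻¹
  have h4 := hD F c
  have h5 := hD F d
  rw [← haeq] at h4
  rw [← hbeq] at h5
  rw [qm_inv φ hhom b] at h3
  rw [hγeq]
  rw [abs_le] at h3 h4 h5 ⊢
  constructor <;> [ (nlinarith [hcd]); (nlinarith [hcd]) ]
end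

section
/- Let G be a topological group and φ : G → ℝ a homogeneous quasimorphism. Then φ is continuous if and only if there exists an open neighborhood U of the identity of G such that φ restricted to U is bounded. -/
open scoped Pointwise

/-- Small powers of a small neighborhood of `1` stay in a given neighborhood. -/
lemma qm_exists_pow_subset {G : Type*} [Group G] [TopologicalSpace G] [IsTopologicalGroup G]
    (n : ℕ) : ∀ U : Set G, IsOpen U → (1 : G) ∈ U →
      ∃ V : Set G, IsOpen V ∧ (1 : G) ∈ V ∧ V ^ n ⊆ U := by
  induction n with
  | zero =>
      intro U hU h1
      refine ⟨U, hU, h1, ?_⟩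
      simp only [pow_zero, Set.one_subset]
      exact h1
  | succ n ih =>
      intro U hU h1
      obtain ⟨W, hWo, hW1, hWW⟩ :=
        exists_open_nhds_one_mul_subset (hU.mem_nhds h1)
      obtain ⟨V, hVo, hV1, hVn⟩ := ih W hWo hW1
      refine ⟨V ∩ W, hVo.inter hWo, ⟨hV1, hW1⟩, ?_⟩
      rw [pow_succ]
      intro z hz
      rcases hz with ⟨a, ha, b, hb, rfl⟩
      exact hWW (Set.mul_mem_mul (hVn (Set.pow_subset_pow_left Set.inter_subset_left ha))
        hb.2)

/-- A homogeneous quasimorphism on a topological group is continuous if and only if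
it is bounded on some open neighborhood of the identity. -/
theorem homogeneous_quasimorphism_continuous_iff
    {G : Type*} [Group G] [TopologicalSpace G] [IsTopologicalGroup G]
    (φ : G → ℝ) (D : ℝ)
    (hD : ∀ x y : G, |φ (x * y) - φ x - φ y| ≤ D)
    (hhom : ∀ (g : G) (m : ℤ), φ (g ^ m) = m * φ g) :
    Continuous φ ↔ ∃ U : Set G, IsOpen U ∧ (1 : G) ∈ U ∧ ∃ C : ℝ, ∀ x ∈ U, |φ x| ≤ C := by
  have hφ1 : φ 1 = 0 := by simpa using hhom 1 0
  have hφpow : ∀ (g : G) (n : ℕ), φ (g ^ n) = n * φ g := by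
    intro g n
    simpa using hhom g n
  constructor
  · intro hcont
    refine ⟨φ ⁻¹' Set.Ioo (-1) 1, (isOpen_Ioo).preimage hcont, ?_, 1, ?_⟩
    · simp [hφ1]
    · intro x hx
      rcases hx with ⟨h1, h2⟩
      rw [abs_le]
      exact ⟨h1.le, h2.le⟩
  · rintro ⟨U, hUo, hU1, C, hC⟩
    have hC0 : 0 ≤ C := le_trans (abs_nonneg _) (hC 1 hU1)
    have hD0 : 0 ≤ D := by simpa [hφ1] using hD 1 1
    rw [continuous_iff_continuousAt]
    intro g
    rw [ContinuousAt, Metric.tendsto_nhds]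
    intro ε hε
    -- choose n with (D + C) / n < ε
    obtain ⟨n, hn⟩ : ∃ n : ℕ, 0 < n ∧ D + C < n * ε := by
      refine ⟨⌈(D + C) / ε⌉₊ + 1, Nat.succ_pos _, ?_⟩
      have h1 : (D + C) / ε < (⌈(D + C) / ε⌉₊ + 1 : ℕ) := by
        push_cast
        exact lt_of_le_of_lt (Nat.le_ceil _) (by linarith)
      calc D + C = (D + C) / ε * ε := by field_simp
        _ < (⌈(D + C) / ε⌉₊ + 1 : ℕ) * ε := by
            exact mul_lt_mul_of_pos_right h1 hε
    obtain ⟨hnpos, hnε⟩ := hn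
    obtain ⟨V, hVo, hV1, hVn⟩ := qm_exists_pow_subset n U hUo hU1
    -- W : elements whose conjugates by g^k (k < n) all lie in V
    set W : Set G := ⋂ k ∈ Finset.range n, (fun y => (g ^ k)⁻¹ * y * g ^ k) ⁻¹' V with hW
    have hWo : IsOpen W := by
      apply isOpen_biInter_finset
      intro k _
      exact hVo.preimage (by continuity)
    have hW1 : (1 : G) ∈ W := by
      simp [hW, hV1]
    refine Filter.eventually_of_mem
      (IsOpen.mem_nhds (hWo.preimage (by continuity : Continuous fun x => g⁻¹ * x))
        (by simpa using hW1)) ?_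
    intro x hx
    set y : G := g⁻¹ * x with hy
    have hgy : g * y = x := by rw [hy]; group
    have hyW : y ∈ W := hx
    have hconj : ∀ k < n, (g ^ k)⁻¹ * y * g ^ k ∈ V := by
      intro k hk
      have := Set.mem_iInter₂.1 hyW k (Finset.mem_range.2 hk)
      exact this
    -- w k := (g^k)⁻¹ * x^k, product of conjugates of y
    have hwmem : ∀ k ≤ n, (g ^ k)⁻¹ * x ^ k ∈ V ^ k := by
      intro k hk
      induction k with
      | zero => simp
      | succ m ihm =>
          have hm : m ≤ n := le_of_lt (Nat.lt_of_succ_le hk)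
          have hcm : (g ^ m)⁻¹ * y * g ^ m ∈ V := hconj m (Nat.lt_of_succ_le hk)
          have hprev : (g ^ m)⁻¹ * x ^ m ∈ V ^ m := ihm hm
          have key : (g ^ (m + 1))⁻¹ * x ^ (m + 1)
              = ((g ^ m)⁻¹ * y * g ^ m) * ((g ^ m)⁻¹ * x ^ m) := by
            have hinv : (g ^ (m + 1))⁻¹ = (g ^ m)⁻¹ * g⁻¹ := by
              rw [pow_succ' g m, mul_inv_rev]
            rw [hinv, pow_succ' x m, hy]
            group
          rw [key, pow_succ' V m]
          exact Set.mul_mem_mul hcm hprev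
    have hwU : (g ^ n)⁻¹ * x ^ n ∈ U := hVn (hwmem n le_rfl)
    have hwC : |φ ((g ^ n)⁻¹ * x ^ n)| ≤ C := hC _ hwU
    -- quasimorphism estimate
    have hsplit := hD (g ^ n) ((g ^ n)⁻¹ * x ^ n)
    have hmul : g ^ n * ((g ^ n)⁻¹ * x ^ n) = x ^ n := by group
    rw [hmul, hφpow x n, hφpow g n] at hsplit
    have hdist : |(n : ℝ) * φ x - (n : ℝ) * φ g| ≤ D + C := by
      calc |(n : ℝ) * φ x - (n : ℝ) * φ g|
          ≤ |(n : ℝ) * φ x - (n : ℝ) * φ g - φ ((g ^ n)⁻¹ * x ^ n)|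
            + |φ ((g ^ n)⁻¹ * x ^ n)| := by
            have := abs_add_le ((n : ℝ) * φ x - (n : ℝ) * φ g - φ ((g ^ n)⁻¹ * x ^ n))
              (φ ((g ^ n)⁻¹ * x ^ n))
            simpa using this
        _ ≤ D + C := add_le_add hsplit hwC
    have hnR : (0 : ℝ) < n := by exact_mod_cast hnpos
    rw [Real.dist_eq]
    have : (n : ℝ) * |φ x - φ g| ≤ D + C := by
      rwa [← abs_of_pos hnR, ← abs_mul, mul_sub]
    nlinarith [abs_nonneg (φ x - φ g)]
end

section
/- Let G be a topological group and φ : G → ℝ a continuous quasimorphism. Then the homogenization φ_h of φ (defined by φ_h(x) = lim_{m→∞} φ(xᵐ)/m) is continuous. -/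
open Filter

/-- The homogenization of a continuous quasimorphism on a topological group
is continuous. -/
theorem homogenization_continuous
    {G : Type*} [Group G] [TopologicalSpace G] [IsTopologicalGroup G]
    (φ : G → ℝ) (D : ℝ)
    (hD : ∀ x y : G, |φ (x * y) - φ x - φ y| ≤ D)
    (hcont : Continuous φ)
    (φh : G → ℝ)
    (hlim : ∀ x : G, Tendsto (fun m : ℕ => φ (x ^ m) / m) atTop (nhds (φh x))) :
    Continuous φh := by
  have h1 : |φ 1| ≤ D := by
    have := hD 1 1
    simpa [abs_sub_comm] using this
  have hD0 : 0 ≤ D := le_trans (abs_nonneg _) h1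
  -- growth bound on powers
  have key : ∀ (x : G) (m : ℕ), |φ (x ^ m) - m * φ x| ≤ m * D + |φ 1| := by
    intro x m
    induction m with
    | zero => simp
    | succ m ih =>
      have h2 := hD (x ^ m) x
      have : φ (x ^ (m + 1)) - (m + 1 : ℕ) * φ x =
          (φ (x ^ m * x) - φ (x ^ m) - φ x) + (φ (x ^ m) - m * φ x) := by
        rw [pow_succ]; push_cast; ring
      rw [this]
      calc |(φ (x ^ m * x) - φ (x ^ m) - φ x) + (φ (x ^ m) - m * φ x)|
          ≤ |φ (x ^ m * x) - φ (x ^ m) - φ x| + |φ (x ^ m) - m * φ x| := abs_add_le _ _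
        _ ≤ D + (m * D + |φ 1|) := add_le_add h2 ih
        _ ≤ (m + 1 : ℕ) * D + |φ 1| := by push_cast; nlinarith
  -- φh is close to φ
  have hclose : ∀ x : G, |φh x - φ x| ≤ 2 * D := by
    intro x
    have ht : Tendsto (fun m : ℕ => |φ (x ^ m) / m - φ x|) atTop
        (nhds |φh x - φ x|) := ((hlim x).sub tendsto_const_nhds).abs
    refine le_of_tendsto ht ?_
    filter_upwards [eventually_ge_atTop 1] with m hm
    have hm0 : (0 : ℝ) < m := by exact_mod_cast hm
    have : |φ (x ^ m) / m - φ x| = |φ (x ^ m) - m * φ x| / m := by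
      rw [← abs_of_pos hm0, ← abs_div]
      congr 1
      field_simp
      rw [abs_of_pos hm0]; ring
    rw [this]
    have h3 := key x m
    have h4 : |φ (x ^ m) - m * φ x| / m ≤ (m * D + |φ 1|) / m :=
      div_le_div_of_nonneg_right h3 hm0.le |>.trans_eq rfl
    refine h4.trans ?_
    rw [div_le_iff₀ hm0]
    have hm1 : (1 : ℝ) ≤ m := by exact_mod_cast hm
    nlinarith
  -- homogeneity
  have hhom : ∀ (x : G) (n : ℕ), 1 ≤ n → φh (x ^ n) = n * φh x := by
    intro x n hn
    have h5 : Tendsto (fun m : ℕ => φ (x ^ (n * m)) / m) atTop (nhds (φh (x ^ n))) := by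
      have := hlim (x ^ n)
      simpa [← pow_mul] using this
    have h6 : Tendsto (fun m : ℕ => φ (x ^ (n * m)) / m) atTop (nhds (n * φh x)) := by
      have hcomp : Tendsto (fun m : ℕ => n * m) atTop atTop :=
        tendsto_atTop_atTop_of_monotone (fun a b hab => Nat.mul_le_mul_left n hab)
          (fun b => ⟨b, Nat.le_mul_of_pos_left b (Nat.lt_of_lt_of_le Nat.zero_lt_one hn)⟩)
      have h7 : Tendsto (fun m : ℕ => φ (x ^ (n * m)) / (n * m)) atTop (nhds (φh x)) := by
        have := (hlim x).comp hcomp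
        simpa [Function.comp_def, Nat.cast_mul] using this
      have h8 := h7.const_mul (n : ℝ)
      have heq : ∀ᶠ m : ℕ in atTop, (n : ℝ) * (φ (x ^ (n * m)) / (n * m)) =
          φ (x ^ (n * m)) / m := by
        filter_upwards [eventually_ge_atTop 1] with m hm
        have hn0 : (n : ℝ) ≠ 0 := by positivity
        have hm0 : (m : ℝ) ≠ 0 := by
          have : (0:ℝ) < m := by exact_mod_cast hm
          positivity
        push_cast
        field_simp
      exact Tendsto.congr' heq h8
    exact tendsto_nhds_unique h5 h6
  -- quasimorphism bound for φh
  have hqm : ∀ a b : G, |φh (a * b) - φh a - φh b| ≤ 7 * D := by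
    intro a b
    have e1 := hclose (a * b)
    have e2 := hclose a
    have e3 := hclose b
    have e4 := hD a b
    have : φh (a * b) - φh a - φh b =
        (φh (a * b) - φ (a * b)) - (φh a - φ a) - (φh b - φ b) +
        (φ (a * b) - φ a - φ b) := by ring
    rw [this]
    calc _ ≤ |(φh (a * b) - φ (a * b)) - (φh a - φ a) - (φh b - φ b)| +
          |φ (a * b) - φ a - φ b| := abs_add_le _ _
      _ ≤ (|φh (a * b) - φ (a * b)| + |φh a - φ a| + |φh b - φ b|) + D := by
          gcongr
          calc _ ≤ |(φh (a * b) - φ (a * b)) - (φh a - φ a)| + |φh b - φ b| := abs_sub _ _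
            _ ≤ (|φh (a * b) - φ (a * b)| + |φh a - φ a|) + |φh b - φ b| := by
                gcongr; exact abs_sub _ _
      _ ≤ (2 * D + 2 * D + 2 * D) + D := by gcongr
      _ = 7 * D := by ring
  -- neighborhood of 1 where φh is bounded
  set C : ℝ := |φ 1| + 1 + 2 * D with hCdef
  have hC0 : 0 ≤ C := by positivity
  set U : Set G := φ ⁻¹' (Metric.ball (φ 1) 1) with hUdef
  have hU : U ∈ nhds (1 : G) :=
    hcont.continuousAt.preimage_mem_nhds (Metric.ball_mem_nhds _ one_pos)
  have hbdd : ∀ z ∈ U, |φh z| ≤ C := by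
    intro z hz
    have hz' : |φ z - φ 1| < 1 := by simpa [hUdef, Real.dist_eq] using hz
    calc |φh z| = |(φh z - φ z) + ((φ z - φ 1) + φ 1)| := by ring_nf
      _ ≤ |φh z - φ z| + |(φ z - φ 1) + φ 1| := abs_add_le _ _
      _ ≤ |φh z - φ z| + (|φ z - φ 1| + |φ 1|) := by gcongr; exact abs_add_le _ _
      _ ≤ 2 * D + (1 + |φ 1|) := add_le_add (hclose z) (add_le_add hz'.le le_rfl)
      _ = C := by rw [hCdef]; ring
  -- continuity
  rw [continuous_iff_continuousAt]
  intro x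
  rw [ContinuousAt, Metric.tendsto_nhds]
  intro ε hε
  obtain ⟨n, hn⟩ := exists_nat_gt ((C + 7 * D) / ε)
  have hn1 : 1 ≤ n := by
    by_contra h
    push_neg at h
    interval_cases n
    have : (C + 7 * D) / ε < 0 := by exact_mod_cast hn
    have : 0 ≤ (C + 7 * D) / ε := by positivity
    linarith
  have hn0 : (0 : ℝ) < n := by exact_mod_cast hn1
  have hkey : (C + 7 * D) / n < ε := by
    rw [div_lt_iff₀ hn0]
    have := (div_lt_iff₀ hε).mp hn
    nlinarith
  -- the map y ↦ (x^n)⁻¹ * y^n is continuous and sends x to 1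
  have hf : Continuous (fun y : G => (x ^ n)⁻¹ * y ^ n) :=
    continuous_const.mul (continuous_pow n)
  have hfx : (x ^ n)⁻¹ * x ^ n = 1 := inv_mul_cancel _
  have hev : ∀ᶠ y in nhds x, (x ^ n)⁻¹ * y ^ n ∈ U := by
    have := hf.continuousAt (x := x)
    apply this.preimage_mem_nhds
    rwa [hfx]
  filter_upwards [hev] with y hy
  have hw : x ^ n * ((x ^ n)⁻¹ * y ^ n) = y ^ n := by group
  have hq := hqm (x ^ n) ((x ^ n)⁻¹ * y ^ n)
  rw [hw, hhom x n hn1, hhom y n hn1] at hq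
  have hb := hbdd _ hy
  have hmain : |(n : ℝ) * (φh y - φh x)| ≤ C + 7 * D := by
    have : (n : ℝ) * (φh y - φh x) =
        ((n : ℝ) * φh y - (n : ℝ) * φh x - φh ((x ^ n)⁻¹ * y ^ n)) +
          φh ((x ^ n)⁻¹ * y ^ n) := by ring
    rw [this]
    calc _ ≤ |(n : ℝ) * φh y - (n : ℝ) * φh x - φh ((x ^ n)⁻¹ * y ^ n)| +
          |φh ((x ^ n)⁻¹ * y ^ n)| := abs_add_le _ _
      _ ≤ 7 * D + C := add_le_add hq hb
      _ = C + 7 * D := by ring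
  rw [Real.dist_eq]
  have : |φh y - φh x| ≤ (C + 7 * D) / n := by
    rw [le_div_iff₀ hn0]
    calc |φh y - φh x| * n = |(n : ℝ) * (φh y - φh x)| := by
          rw [abs_mul, abs_of_pos hn0]; ring
      _ ≤ C + 7 * D := hmain
  linarith
end
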